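/- Let A, B, C be real numbers with B ≥ 0, C ≠ 0, and suppose A < 0 implies A² < 4B. If z is the unique positive solution of z³ + 2Az² + (A² − 4B)z − C² = 0, and W = ±√z, Y = (W³ + AW + C)/(2W), then (W, Y) satisfies the system Y² − (A + W²)Y + B = 0 and W³ + (A − 2Y)W + C = 0. -/

import Mathlib

theorem system_case3 (A B C z W Y : ℝ) (hB : 0 ≤ B) (hC : C ≠ 0)
    (hAB : A < 0 → A ^ 2 < 4 * B) (hz : 0 < z)
    (hroot : z ^ 3 + 2 * A * z ^ 2 + (A ^ 2 - 4 * B) * z - C ^ 2 = 0)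
    (hW : W = Real.sqrt z ∨ W = -Real.sqrt z)
    (hY : Y = (W ^ 3 + A * W + C) / (2 * W)) :
    Y ^ 2 - (A + W ^ 2) * Y + B = 0 ∧ W ^ 3 + (A - 2 * Y) * W + C = 0 := by
  have hW2 : W ^ 2 = z := by
    rcases hW with h | h <;> rw [h] <;> simp [Real.sq_sqrt hz.le, neg_pow]
  have hWne : W ≠ 0 := by
    intro h; rw [h] at hW2; simp at hW2; exact hz.ne' hW2.symm
  subst hY
  rw [← hW2] at hroot
  constructor
  · field_simp
    linear_combination (-1) * hroot
  · field_simp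
    ring
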